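/- Let k ∈ ℕ and let a_0, …, a_k be rational numbers with 0 ≤ a_i ≤ 1/2 for all i ≤ k. If ∑_{i=0}^{k} a_i ≤ 2, then ∏_{i=0}^{k} (1 − a_i) ≥ 1/81. -/
import Mathlib

lemma key_onevar (a : ℚ) (ha0 : 0 ≤ a) (ha : a ≤ 1/2) :
    (4 - a)^6 ≤ 4096 * (1 - a) := by
  nlinarith [sq_nonneg a, sq_nonneg (a - 1/2), mul_nonneg ha0 ha0,
    mul_nonneg (mul_nonneg ha0 ha0) ha0, sq_nonneg (a*(a-1/2)),
    mul_nonneg ha0 (sub_nonneg.mpr ha), mul_nonneg (mul_nonneg ha0 ha0) (sub_nonneg.mpr ha)]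

lemma key_poly (a u : ℚ) (ha0 : 0 ≤ a) (ha : a ≤ 1/2) (hu1 : 2 + a ≤ u) (hu2 : u ≤ 4) :
    (u - a)^6 ≤ (1 - a) * u^6 := by
  have hua : 0 ≤ u - a := by linarith
  have h1 : 4 * (u - a) ≤ u * (4 - a) := by nlinarith
  have h2 : (4 * (u - a))^6 ≤ (u * (4 - a))^6 := by
    apply pow_le_pow_left₀ (by linarith) h1
  have h3 : (u * (4 - a))^6 = u^6 * (4 - a)^6 := by ring
  have h4 : (4 * (u - a))^6 = 4096 * (u - a)^6 := by ring
  have h5 : u^6 * (4 - a)^6 ≤ u^6 * (4096 * (1 - a)) := by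
    apply mul_le_mul_of_nonneg_left (key_onevar a ha0 ha)
    positivity
  nlinarith [h2, h3, h4, h5]

lemma aux_ind (a : ℕ → ℚ) : ∀ n : ℕ, (∀ i < n, 0 ≤ a i ∧ a i ≤ 1/2) →
    (∑ i ∈ Finset.range n, a i ≤ 2) →
    (4 - ∑ i ∈ Finset.range n, a i)^6 ≤ 4096 * ∏ i ∈ Finset.range n, (1 - a i) := by
  intro n
  induction n with
  | zero => intro _ _; norm_num
  | succ m ih =>
    intro hb hsum
    rw [Finset.sum_range_succ] at hsum ⊢
    rw [Finset.prod_range_succ]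
    have ham := hb m (Nat.lt_succ_self m)
    have hsum0 : 0 ≤ ∑ i ∈ Finset.range m, a i :=
      Finset.sum_nonneg fun i hi => (hb i (Nat.lt_succ_of_lt (Finset.mem_range.mp hi))).1
    have hsm : ∑ i ∈ Finset.range m, a i ≤ 2 := by linarith [ham.1]
    have ihm := ih (fun i hi => hb i (Nat.lt_succ_of_lt hi)) hsm
    set s := ∑ i ∈ Finset.range m, a i with hsdef
    have hkey : (4 - (s + a m))^6 ≤ (1 - a m) * (4 - s)^6 := by
      have : (4:ℚ) - (s + a m) = (4 - s) - a m := by ring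
      rw [this]
      exact key_poly (a m) (4 - s) ham.1 ham.2 (by linarith) (by linarith)
    have h2 : (1 - a m) * (4 - s)^6 ≤ (1 - a m) * (4096 * ∏ i ∈ Finset.range m, (1 - a i)) := by
      apply mul_le_mul_of_nonneg_left ihm (by linarith [ham.2])
    calc (4 - (s + a m))^6 ≤ (1 - a m) * (4 - s)^6 := hkey
      _ ≤ (1 - a m) * (4096 * ∏ i ∈ Finset.range m, (1 - a i)) := h2
      _ = 4096 * ((∏ i ∈ Finset.range m, (1 - a i)) * (1 - a m)) := by ring

/-- If `0 ≤ aᵢ ≤ 1/2` for `i ≤ k` and `∑_{i≤k} aᵢ ≤ 2`, then `∏_{i≤k} (1 - aᵢ) ≥ 1/81`. -/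
theorem prod_one_sub_ge_of_sum_le (k : ℕ) (a : ℕ → ℚ)
    (h : ∀ i ≤ k, 0 ≤ a i ∧ a i ≤ 1 / 2)
    (hs : ∑ i ∈ Finset.range (k + 1), a i ≤ 2) :
    (1 : ℚ) / 81 ≤ ∏ i ∈ Finset.range (k + 1), (1 - a i) := by
  have hb : ∀ i < k + 1, 0 ≤ a i ∧ a i ≤ 1/2 := fun i hi => h i (Nat.lt_succ_iff.mp hi)
  have hmain := aux_ind a (k + 1) hb hs
  have h0 : 0 ≤ ∑ i ∈ Finset.range (k+1), a i :=
    Finset.sum_nonneg fun i hi => (hb i (Finset.mem_range.mp hi)).1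
  have h2 : ((2:ℚ))^6 ≤ (4 - ∑ i ∈ Finset.range (k+1), a i)^6 := by
    apply pow_le_pow_left₀ (by norm_num) (by linarith)
  have : (64:ℚ) ≤ 4096 * ∏ i ∈ Finset.range (k+1), (1 - a i) := by
    calc (64:ℚ) = 2^6 := by norm_num
      _ ≤ (4 - ∑ i ∈ Finset.range (k+1), a i)^6 := h2
      _ ≤ 4096 * ∏ i ∈ Finset.range (k+1), (1 - a i) := hmain
  linarith
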